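/- arXiv:2502.20286 — 6 statements merged into one kernel-verified Lean document; each statement's English description precedes it below -/
import Mathlib

section
/- Let X be a real I₁ × I₂ matrix with singular value decomposition X = U D Vᵀ, where D = diag(d₁, ..., d_R). Then the minimizer of (1/2)‖X − Y‖_F² + σ‖Y‖_* over all matrices Y is Ŷ = U D̂ Vᵀ, where D̂ = diag(max(d₁ − σ, 0), ..., max(d_R − σ, 0)) and ‖·‖_* denotes the nuclear norm (sum of singular values). -/
open Matrix

/-- The nuclear norm of a real matrix: sum of its singular values,
i.e. the square roots of the eigenvalues of `Xᴴ * X`. -/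
noncomputable def nuclearNorm {m n : ℕ} (X : Matrix (Fin m) (Fin n) ℝ) : ℝ :=
  ∑ i, Real.sqrt ((Matrix.isHermitian_conjTranspose_mul_self X).eigenvalues i)

/-- Squared Frobenius norm. -/
def frobSq {m n : ℕ} (X : Matrix (Fin m) (Fin n) ℝ) : ℝ :=
  ∑ i, ∑ j, (X i j) ^ 2

/-! ### Auxiliary lemmas -/

lemma dotT {m n : ℕ} (M : Matrix (Fin m) (Fin n) ℝ) (v : Fin m → ℝ) (w : Fin n → ℝ) :
    (Mᵀ *ᵥ v) ⬝ᵥ w = v ⬝ᵥ (M *ᵥ w) := by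
  simp only [dotProduct, Matrix.mulVec, dotProduct, Matrix.transpose_apply,
    Finset.sum_mul, Finset.mul_sum]
  rw [Finset.sum_comm]
  apply Finset.sum_congr rfl; intro i _; apply Finset.sum_congr rfl; intro j _; ring

lemma dotT' {m n : ℕ} (M : Matrix (Fin m) (Fin n) ℝ) (v : Fin n → ℝ) (w : Fin n → ℝ) :
    (M *ᵥ v) ⬝ᵥ (M *ᵥ w) = v ⬝ᵥ ((Mᵀ * M) *ᵥ w) := by
  have := dotT Mᵀ v (M *ᵥ w)
  simp only [Matrix.transpose_transpose] at this
  rw [this, Matrix.mulVec_mulVec]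

lemma dot_self_nonneg {n : ℕ} (v : Fin n → ℝ) : (0:ℝ) ≤ v ⬝ᵥ v :=
  Finset.sum_nonneg fun _ _ => mul_self_nonneg _

lemma proj_dot_le {n r : ℕ} (V : Matrix (Fin n) (Fin r) ℝ) (hV : Vᵀ * V = 1)
    (v : Fin n → ℝ) : (Vᵀ *ᵥ v) ⬝ᵥ (Vᵀ *ᵥ v) ≤ v ⬝ᵥ v := by
  set u := Vᵀ *ᵥ v with hu
  set a := u ⬝ᵥ u with hadef
  have ha : (0:ℝ) ≤ a := dot_self_nonneg u
  have key : a = v ⬝ᵥ (V *ᵥ u) := by rw [hadef, hu, dotT]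
  have hPv : (V *ᵥ u) ⬝ᵥ (V *ᵥ u) = a := by
    rw [dotT' V u u, hV]; simp [hadef]
  have hcs : (v ⬝ᵥ (V *ᵥ u)) ^ 2 ≤ (v ⬝ᵥ v) * ((V *ᵥ u) ⬝ᵥ (V *ᵥ u)) := by
    have h := Finset.sum_mul_sq_le_sq_mul_sq Finset.univ v (V *ᵥ u)
    simpa [dotProduct, sq, mul_pow] using h
  rw [hPv, ← key] at hcs
  have hvv : (0:ℝ) ≤ v ⬝ᵥ v := dot_self_nonneg v
  nlinarith [hcs, ha, hvv]

lemma cs_sqrt {ι : Type*} [Fintype ι] (f g : ι → ℝ) :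
    ∑ i, f i * g i ≤ Real.sqrt (∑ i, f i ^ 2) * Real.sqrt (∑ i, g i ^ 2) := by
  have h := Finset.sum_mul_sq_le_sq_mul_sq Finset.univ f g
  have h1 : ∑ i, f i * g i ≤ |∑ i, f i * g i| := le_abs_self _
  have h2 : |∑ i, f i * g i| = Real.sqrt ((∑ i, f i * g i) ^ 2) := (Real.sqrt_sq_eq_abs _).symm
  calc ∑ i, f i * g i ≤ Real.sqrt ((∑ i, f i * g i) ^ 2) := h2 ▸ h1
    _ ≤ Real.sqrt ((∑ i, f i ^ 2) * (∑ i, g i ^ 2)) := Real.sqrt_le_sqrt h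
    _ = _ := Real.sqrt_mul (Finset.sum_nonneg fun i _ => sq_nonneg _) _

lemma sym_diag_dot_le {n : ℕ} (W : Matrix (Fin n) (Fin n) ℝ) (h2 : Wᵀ * W = 1)
    (g : Fin n → ℝ) (hg : ∀ i, 0 ≤ g i ∧ g i ≤ 1) (v : Fin n → ℝ) :
    v ⬝ᵥ ((W * Matrix.diagonal g * Wᵀ) *ᵥ v) ≤ v ⬝ᵥ v := by
  set u := Wᵀ *ᵥ v with hu
  have h1 : (W * Matrix.diagonal g * Wᵀ) *ᵥ v = W *ᵥ (Matrix.diagonal g *ᵥ u) := by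
    rw [← Matrix.mulVec_mulVec, ← Matrix.mulVec_mulVec, hu]
  rw [h1, ← dotT W v (Matrix.diagonal g *ᵥ u), ← hu]
  have hdg : ∀ i, (Matrix.diagonal g *ᵥ u) i = g i * u i := by
    intro i; simp [Matrix.mulVec, dotProduct, Matrix.diagonal, Finset.sum_ite_eq]
  have h3 : u ⬝ᵥ (Matrix.diagonal g *ᵥ u) ≤ u ⬝ᵥ u := by
    simp only [dotProduct]
    apply Finset.sum_le_sum
    intro i _
    rw [hdg i]
    nlinarith [(hg i).1, (hg i).2, mul_self_nonneg (u i)]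
  exact le_trans h3 (proj_dot_le W h2 v)

lemma trace_mul_diagonal' {r : ℕ} (M : Matrix (Fin r) (Fin r) ℝ) (f : Fin r → ℝ) :
    Matrix.trace (M * Matrix.diagonal f) = ∑ i, M i i * f i := by
  simp [Matrix.trace, Matrix.mul_apply, Matrix.diagonal, Finset.sum_ite_eq, Matrix.diag]

lemma trace_transpose_mul_eq {m n : ℕ} (A B : Matrix (Fin m) (Fin n) ℝ) :
    Matrix.trace (Aᵀ * B) = ∑ i, ∑ j, A i j * B i j := by
  simp only [Matrix.trace, Matrix.mul_apply, Matrix.diag, Matrix.transpose_apply,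
    Matrix.diag_apply]
  rw [Finset.sum_comm]

lemma frobSq_eq_trace {m n : ℕ} (A : Matrix (Fin m) (Fin n) ℝ) :
    frobSq A = Matrix.trace (Aᵀ * A) := by
  rw [trace_transpose_mul_eq, frobSq]; simp [sq]

lemma frobSq_nonneg {m n : ℕ} (A : Matrix (Fin m) (Fin n) ℝ) : 0 ≤ frobSq A :=
  Finset.sum_nonneg fun _ _ => Finset.sum_nonneg fun _ _ => sq_nonneg _

lemma frobSq_add_expand {m n : ℕ} (A B : Matrix (Fin m) (Fin n) ℝ) :
    frobSq (A + B) = frobSq A + frobSq B + 2 * Matrix.trace (Aᵀ * B) := by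
  simp only [frobSq_eq_trace]
  rw [Matrix.transpose_add, Matrix.add_mul, Matrix.mul_add, Matrix.mul_add,
    Matrix.trace_add, Matrix.trace_add, Matrix.trace_add]
  have h : Matrix.trace (Bᵀ * A) = Matrix.trace (Aᵀ * B) := by
    rw [← Matrix.trace_transpose, Matrix.transpose_mul, Matrix.transpose_transpose]
  rw [h]; ring

/-- operator norm bound for `U diag(c) Vᵀ` with `c² ≤ 1`. -/
lemma udv_dot_le {m n r : ℕ} (U : Matrix (Fin m) (Fin r) ℝ) (V : Matrix (Fin n) (Fin r) ℝ)
    (hU : Uᵀ * U = 1) (hV : Vᵀ * V = 1) (c : Fin r → ℝ) (hc : ∀ i, c i ^ 2 ≤ 1)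
    (v : Fin n → ℝ) :
    ((U * Matrix.diagonal c * Vᵀ) *ᵥ v) ⬝ᵥ ((U * Matrix.diagonal c * Vᵀ) *ᵥ v) ≤ v ⬝ᵥ v := by
  set u := Vᵀ *ᵥ v with hu
  set w := Matrix.diagonal c *ᵥ u with hw
  have hGv : (U * Matrix.diagonal c * Vᵀ) *ᵥ v = U *ᵥ w := by
    rw [← Matrix.mulVec_mulVec, ← Matrix.mulVec_mulVec, hw, hu]
  rw [hGv, dotT' U w w, hU]
  simp only [Matrix.one_mulVec]
  have hwu : ∀ i, w i = c i * u i := by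
    intro i; rw [hw]; simp [Matrix.mulVec, dotProduct, Matrix.diagonal, Finset.sum_ite_eq]
  have h1 : w ⬝ᵥ w ≤ u ⬝ᵥ u := by
    simp only [dotProduct]
    apply Finset.sum_le_sum
    intro i _
    rw [hwu i]
    nlinarith [hc i, sq_nonneg (u i), sq_nonneg (c i)]
  exact le_trans h1 (proj_dot_le V hV v)

/-- Dual bound: `tr (Gᵀ Y) ≤ ‖Y‖_*` whenever `G` is a contraction. -/
lemma dual_bound {m n : ℕ} (G Y : Matrix (Fin m) (Fin n) ℝ)
    (hG : ∀ v : Fin n → ℝ, (G *ᵥ v) ⬝ᵥ (G *ᵥ v) ≤ v ⬝ᵥ v) :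
    Matrix.trace (Gᵀ * Y) ≤ nuclearNorm Y := by
  have hH := Matrix.isHermitian_conjTranspose_mul_self Y
  set μ := hH.eigenvalues with hμ
  set W : Matrix (Fin n) (Fin n) ℝ := ↑(hH.eigenvectorUnitary) with hWdef
  have hSpec : Yᵀ * Y = W * Matrix.diagonal μ * Wᵀ := by
    have h := hH.spectral_theorem
    simpa [RCLike.ofReal_real_eq_id, ← Matrix.conjTranspose_eq_transpose_of_trivial,
      Matrix.star_eq_conjTranspose] using h
  have h2 : Wᵀ * W = 1 := by
    have := Matrix.mem_unitaryGroup_iff'.mp hH.eigenvectorUnitary.2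
    simpa [← Matrix.conjTranspose_eq_transpose_of_trivial, Matrix.star_eq_conjTranspose] using this
  have h3 : W * Wᵀ = 1 := by
    have := Matrix.mem_unitaryGroup_iff.mp hH.eigenvectorUnitary.2
    simpa [← Matrix.conjTranspose_eq_transpose_of_trivial, Matrix.star_eq_conjTranspose] using this
  have hcyc : Matrix.trace (Gᵀ * Y) = Matrix.trace ((G * W)ᵀ * (Y * W)) := by
    rw [Matrix.transpose_mul]
    simp only [← Matrix.mul_assoc]
    rw [Matrix.trace_mul_cycle]
    simp only [← Matrix.mul_assoc]
    rw [h3, Matrix.one_mul]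
  have hdiag : (Y * W)ᵀ * (Y * W) = Matrix.diagonal μ := by
    rw [Matrix.transpose_mul]
    simp only [← Matrix.mul_assoc]
    rw [Matrix.mul_assoc Wᵀ Yᵀ Y, hSpec]
    simp only [← Matrix.mul_assoc]
    rw [h2, Matrix.one_mul, Matrix.mul_assoc, h2, Matrix.mul_one]
  have hμnn : ∀ i, 0 ≤ μ i := fun i => Matrix.eigenvalues_conjTranspose_mul_self_nonneg Y i
  rw [hcyc, trace_transpose_mul_eq, Finset.sum_comm]
  have key : ∀ i : Fin n, ∑ j, (G * W) j i * (Y * W) j i ≤ Real.sqrt (μ i) := by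
    intro i
    have hYW : ∑ j, ((Y * W) j i) ^ 2 = μ i := by
      calc ∑ j, ((Y * W) j i) ^ 2 = ((Y * W)ᵀ * (Y * W)) i i := by
            simp only [Matrix.mul_apply, Matrix.transpose_apply, sq]
        _ = μ i := by rw [hdiag]; simp
    have hGW : ∑ j, ((G * W) j i) ^ 2 ≤ 1 := by
      have hcol : ∀ j, (G * W) j i = (G *ᵥ (fun k => W k i)) j := by
        intro j; simp [Matrix.mul_apply, Matrix.mulVec, dotProduct]
      have hW1 : ((fun k => W k i) : Fin n → ℝ) ⬝ᵥ (fun k => W k i) = 1 := by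
        calc ((fun k => W k i) : Fin n → ℝ) ⬝ᵥ (fun k => W k i) = (Wᵀ * W) i i := by
              simp [Matrix.mul_apply, Matrix.transpose_apply, dotProduct]
          _ = 1 := by rw [h2]; simp
      have := hG (fun k => W k i)
      rw [hW1] at this
      calc ∑ j, ((G * W) j i) ^ 2 = (G *ᵥ (fun k => W k i)) ⬝ᵥ (G *ᵥ (fun k => W k i)) := by
            simp only [dotProduct, sq, hcol]
        _ ≤ 1 := this
    calc ∑ j, (G * W) j i * (Y * W) j i
        ≤ Real.sqrt (∑ j, ((G * W) j i) ^ 2) * Real.sqrt (∑ j, ((Y * W) j i) ^ 2) :=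
          cs_sqrt _ _
      _ ≤ 1 * Real.sqrt (μ i) := by
          rw [hYW]
          have hs : Real.sqrt (∑ j, ((G * W) j i) ^ 2) ≤ 1 := by
            calc Real.sqrt (∑ j, ((G * W) j i) ^ 2) ≤ Real.sqrt 1 := Real.sqrt_le_sqrt hGW
              _ = 1 := Real.sqrt_one
          exact mul_le_mul hs le_rfl (Real.sqrt_nonneg _) zero_le_one
      _ = Real.sqrt (μ i) := one_mul _
  exact Finset.sum_le_sum fun i _ => key i

/-- Nuclear norm of `U diag(f) Vᵀ` is at most `∑ f` when `f ≥ 0`. -/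
lemma nuclearNorm_udv_le {m n r : ℕ} (U : Matrix (Fin m) (Fin r) ℝ)
    (V : Matrix (Fin n) (Fin r) ℝ) (hU : Uᵀ * U = 1) (hV : Vᵀ * V = 1)
    (f : Fin r → ℝ) (hf : ∀ i, 0 ≤ f i) :
    nuclearNorm (U * Matrix.diagonal f * Vᵀ) ≤ ∑ i, f i := by
  set E := U * Matrix.diagonal f * Vᵀ with hE
  have hH := Matrix.isHermitian_conjTranspose_mul_self E
  set μ := hH.eigenvalues with hμ
  set W : Matrix (Fin n) (Fin n) ℝ := ↑(hH.eigenvectorUnitary) with hWdef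
  have hSpec : Eᵀ * E = W * Matrix.diagonal μ * Wᵀ := by
    have h := hH.spectral_theorem
    simpa [RCLike.ofReal_real_eq_id, ← Matrix.conjTranspose_eq_transpose_of_trivial,
      Matrix.star_eq_conjTranspose] using h
  have h2 : Wᵀ * W = 1 := by
    have := Matrix.mem_unitaryGroup_iff'.mp hH.eigenvectorUnitary.2
    simpa [← Matrix.conjTranspose_eq_transpose_of_trivial, Matrix.star_eq_conjTranspose] using this
  have hμnn : ∀ i, 0 ≤ μ i := fun i => Matrix.eigenvalues_conjTranspose_mul_self_nonneg E i
  set e : Fin n → ℝ := fun i => if μ i = 0 then 0 else (Real.sqrt (μ i))⁻¹ with he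
  set G₀ := E * W * Matrix.diagonal e * Wᵀ with hG₀
  have heμ : ∀ i, e i * μ i = Real.sqrt (μ i) := by
    intro i
    rw [he]
    by_cases h : μ i = 0
    · simp [h]
    · have hpos : 0 < μ i := lt_of_le_of_ne (hμnn i) (Ne.symm h)
      have hs : 0 < Real.sqrt (μ i) := Real.sqrt_pos.mpr hpos
      simp only [h, if_false]
      field_simp
      exact (Real.sq_sqrt (le_of_lt hpos)).symm
  have he2μ : ∀ i, 0 ≤ e i ^ 2 * μ i ∧ e i ^ 2 * μ i ≤ 1 := by
    intro i
    rw [he]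
    by_cases h : μ i = 0
    · simp [h]
    · have hpos : 0 < μ i := lt_of_le_of_ne (hμnn i) (Ne.symm h)
      have hs : 0 < Real.sqrt (μ i) := Real.sqrt_pos.mpr hpos
      simp only [h, if_false]
      constructor
      · positivity
      · rw [inv_pow, Real.sq_sqrt (le_of_lt hpos)]
        rw [inv_mul_cancel₀ (ne_of_gt hpos)]
  have htr : Matrix.trace (G₀ᵀ * E) = ∑ i, Real.sqrt (μ i) := by
    rw [hG₀]
    simp only [Matrix.transpose_mul, Matrix.transpose_transpose, Matrix.diagonal_transpose,
      ← Matrix.mul_assoc]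
    rw [Matrix.mul_assoc (W * Matrix.diagonal e * Wᵀ) Eᵀ E, hSpec]
    simp only [← Matrix.mul_assoc]
    rw [Matrix.mul_assoc (W * Matrix.diagonal e) Wᵀ W, h2, Matrix.mul_one]
    rw [Matrix.trace_mul_cycle]
    simp only [← Matrix.mul_assoc]
    rw [h2, Matrix.one_mul]
    rw [Matrix.diagonal_mul_diagonal, Matrix.trace_diagonal]
    exact Finset.sum_congr rfl fun i _ => by rw [← heμ i]
  have hGtG : G₀ᵀ * G₀ = W * Matrix.diagonal (fun i => e i ^ 2 * μ i) * Wᵀ := by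
    rw [hG₀]
    simp only [Matrix.transpose_mul, Matrix.transpose_transpose, Matrix.diagonal_transpose,
      ← Matrix.mul_assoc]
    rw [Matrix.mul_assoc (W * Matrix.diagonal e * Wᵀ) Eᵀ E, hSpec]
    simp only [← Matrix.mul_assoc]
    rw [Matrix.mul_assoc (W * Matrix.diagonal e) Wᵀ W, h2, Matrix.mul_one]
    rw [Matrix.mul_assoc (W * Matrix.diagonal e * Matrix.diagonal μ) Wᵀ W, h2, Matrix.mul_one]
    have hd : Matrix.diagonal e * Matrix.diagonal μ * Matrix.diagonal e
        = Matrix.diagonal (fun i => e i ^ 2 * μ i) := by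
      rw [Matrix.diagonal_mul_diagonal, Matrix.diagonal_mul_diagonal]
      congr 1
      funext i
      ring
    rw [Matrix.mul_assoc W (Matrix.diagonal e) (Matrix.diagonal μ),
      Matrix.mul_assoc W (Matrix.diagonal e * Matrix.diagonal μ) (Matrix.diagonal e),
      hd]
  have hG₀bd : ∀ v : Fin n → ℝ, (G₀ *ᵥ v) ⬝ᵥ (G₀ *ᵥ v) ≤ v ⬝ᵥ v := by
    intro v
    rw [dotT' G₀ v v, hGtG]
    exact sym_diag_dot_le W h2 _ he2μ v
  have hnn : nuclearNorm E = ∑ i, Real.sqrt (μ i) := rfl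
  rw [hnn, ← htr]
  have hexp : Matrix.trace (G₀ᵀ * E) = ∑ i, (Vᵀ * G₀ᵀ * U) i i * f i := by
    rw [hE]
    simp only [← Matrix.mul_assoc]
    rw [show G₀ᵀ * U * Matrix.diagonal f * Vᵀ
        = (G₀ᵀ * U * Matrix.diagonal f) * Vᵀ from rfl,
      Matrix.trace_mul_comm]
    simp only [← Matrix.mul_assoc]
    rw [trace_mul_diagonal']
  rw [hexp]
  apply Finset.sum_le_sum
  intro i _
  have hterm : (Vᵀ * G₀ᵀ * U) i i ≤ 1 := by
    have hform : (Vᵀ * G₀ᵀ * U) i i = (G₀ *ᵥ (fun k => V k i)) ⬝ᵥ (fun j => U j i) := by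
      simp only [Matrix.mul_apply, Matrix.transpose_apply, Matrix.mulVec, dotProduct]
      apply Finset.sum_congr rfl; intro x _
      congr 1
      apply Finset.sum_congr rfl; intro y _
      ring
    have hVcol : ((fun k => V k i) : Fin n → ℝ) ⬝ᵥ (fun k => V k i) = 1 := by
      calc ((fun k => V k i) : Fin n → ℝ) ⬝ᵥ (fun k => V k i) = (Vᵀ * V) i i := by
            simp [Matrix.mul_apply, Matrix.transpose_apply, dotProduct]
        _ = 1 := by rw [hV]; simp
    have hUcol : ((fun j => U j i) : Fin m → ℝ) ⬝ᵥ (fun j => U j i) = 1 := by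
      calc ((fun j => U j i) : Fin m → ℝ) ⬝ᵥ (fun j => U j i) = (Uᵀ * U) i i := by
            simp [Matrix.mul_apply, Matrix.transpose_apply, dotProduct]
        _ = 1 := by rw [hU]; simp
    have hGv : (G₀ *ᵥ (fun k => V k i)) ⬝ᵥ (G₀ *ᵥ (fun k => V k i)) ≤ 1 := by
      have := hG₀bd (fun k => V k i)
      rwa [hVcol] at this
    rw [hform]
    calc (G₀ *ᵥ (fun k => V k i)) ⬝ᵥ (fun j => U j i)
        = ∑ j, (G₀ *ᵥ (fun k => V k i)) j * (fun j => U j i) j := rfl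
      _ ≤ Real.sqrt (∑ j, ((G₀ *ᵥ (fun k => V k i)) j) ^ 2)
            * Real.sqrt (∑ j, ((fun j => U j i) j) ^ 2) := cs_sqrt _ _
      _ ≤ 1 := by
          have e1 : (∑ j, ((G₀ *ᵥ (fun k => V k i)) j) ^ 2)
              = (G₀ *ᵥ (fun k => V k i)) ⬝ᵥ (G₀ *ᵥ (fun k => V k i)) := by
            simp [dotProduct, sq]
          have e2 : (∑ j, ((fun j => U j i) j) ^ 2)
              = ((fun j => U j i) : Fin m → ℝ) ⬝ᵥ (fun j => U j i) := by
            simp [dotProduct, sq]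
          rw [e1, e2, hUcol, Real.sqrt_one, mul_one]
          calc Real.sqrt ((G₀ *ᵥ (fun k => V k i)) ⬝ᵥ (G₀ *ᵥ (fun k => V k i)))
              ≤ Real.sqrt 1 := Real.sqrt_le_sqrt hGv
            _ = 1 := Real.sqrt_one
  nlinarith [hf i, hterm]

theorem stmt3 {I₁ I₂ R : ℕ} (X : Matrix (Fin I₁) (Fin I₂) ℝ)
    (U : Matrix (Fin I₁) (Fin R) ℝ) (V : Matrix (Fin I₂) (Fin R) ℝ)
    (d : Fin R → ℝ) (hd : ∀ r, 0 ≤ d r)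
    (hU : Uᵀ * U = 1) (hV : Vᵀ * V = 1)
    (hX : X = U * Matrix.diagonal d * Vᵀ) (σ : ℝ) (hσ : 0 < σ) :
    ∀ Y : Matrix (Fin I₁) (Fin I₂) ℝ,
      (1 / 2) * frobSq (X - U * Matrix.diagonal (fun r => max (d r - σ) 0) * Vᵀ) +
        σ * nuclearNorm (U * Matrix.diagonal (fun r => max (d r - σ) 0) * Vᵀ) ≤
      (1 / 2) * frobSq (X - Y) + σ * nuclearNorm Y := by
  intro Y
  set dh : Fin R → ℝ := fun r => max (d r - σ) 0 with hdh
  set E : Matrix (Fin I₁) (Fin I₂) ℝ := U * Matrix.diagonal dh * Vᵀ with hE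
  set mn : Fin R → ℝ := fun r => min (d r) σ with hmn
  have hsub : X - E = U * Matrix.diagonal mn * Vᵀ := by
    rw [hX, hE, ← Matrix.sub_mul, ← Matrix.mul_sub, Matrix.diagonal_sub]
    have hfun : (fun i => d i - dh i) = mn := by
      funext r
      simp only [hdh, hmn]
      rcases le_total (d r) σ with h | h
      · rw [min_eq_left h, max_eq_right (by linarith), sub_zero]
      · rw [min_eq_right h, max_eq_left (by linarith)]; ring
    rw [hfun]
  set c : Fin R → ℝ := fun r => mn r / σ with hc
  have hsmul : U * Matrix.diagonal mn * Vᵀ = σ • (U * Matrix.diagonal c * Vᵀ) := by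
    have h0 : mn = σ • c := by
      funext r
      simp only [Pi.smul_apply, hc, smul_eq_mul]
      field_simp
    rw [h0, Matrix.diagonal_smul, Matrix.mul_smul, Matrix.smul_mul]
  have hc2 : ∀ r, c r ^ 2 ≤ 1 := by
    intro r
    have h1 : 0 ≤ c r := div_nonneg (le_min (hd r) hσ.le) hσ.le
    have h2 : c r ≤ 1 := by
      rw [hc]
      exact (div_le_one hσ).mpr (min_le_right _ _)
    nlinarith
  have hdhnn : ∀ r, 0 ≤ dh r := fun r => le_max_right _ _
  -- ⟨X - E, Y⟩ ≤ σ ‖Y‖_*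
  have hdual : Matrix.trace ((X - E)ᵀ * Y) ≤ σ * nuclearNorm Y := by
    rw [hsub, hsmul, Matrix.transpose_smul, Matrix.smul_mul, Matrix.trace_smul, smul_eq_mul]
    exact mul_le_mul_of_nonneg_left
      (dual_bound (U * Matrix.diagonal c * Vᵀ) Y (udv_dot_le U V hU hV c hc2)) hσ.le
  -- ⟨X - E, E⟩ = σ ∑ dh
  have htrE : Matrix.trace ((X - E)ᵀ * E) = σ * ∑ r, dh r := by
    rw [hsub, hE]
    simp only [Matrix.transpose_mul, Matrix.transpose_transpose, Matrix.diagonal_transpose,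
      ← Matrix.mul_assoc]
    rw [Matrix.mul_assoc (V * Matrix.diagonal mn) Uᵀ U, hU, Matrix.mul_one]
    rw [Matrix.trace_mul_cycle]
    simp only [← Matrix.mul_assoc]
    rw [hV, Matrix.one_mul, Matrix.diagonal_mul_diagonal, Matrix.trace_diagonal]
    rw [Finset.mul_sum]
    apply Finset.sum_congr rfl
    intro r _
    simp only [hmn, hdh]
    rcases le_total (d r) σ with h | h
    · rw [max_eq_right (by linarith)]; ring
    · rw [max_eq_left (by linarith), min_eq_right h]
  -- ‖E‖_* ≤ ∑ dh
  have hEbd : nuclearNorm E ≤ ∑ r, dh r := nuclearNorm_udv_le U V hU hV dh hdhnn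
  -- expansion of frobSq (X - Y)
  have hXY : X - Y = (X - E) + (E - Y) := by abel
  have hfr : frobSq (X - Y)
      = frobSq (X - E) + frobSq (E - Y) + 2 * Matrix.trace ((X - E)ᵀ * (E - Y)) := by
    rw [hXY, frobSq_add_expand]
  have htr2 : Matrix.trace ((X - E)ᵀ * (E - Y))
      = σ * ∑ r, dh r - Matrix.trace ((X - E)ᵀ * Y) := by
    rw [Matrix.mul_sub, Matrix.trace_sub, htrE]
  have hfrnn : 0 ≤ frobSq (E - Y) := frobSq_nonneg _
  have hnuc : σ * nuclearNorm E ≤ σ * ∑ r, dh r := mul_le_mul_of_nonneg_left hEbd hσ.le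
  rw [hfr, htr2]
  linarith [hdual, hnuc, hfrnn]
end

section
/- Let 𝒳 ∈ ℝ^{m×n×k} be a three-way tensor and σ > 0. Then min over a ∈ ℝ^m, b ∈ ℝ^n, c ∈ ℝ^k of ‖𝒳 − a∘b∘c‖_F² + σ(‖a‖² + ‖b‖² + ‖c‖²) equals min over λ ≥ 0 and unit vectors ã, b̃, c̃ of ‖𝒳 − λ ã∘b̃∘c̃‖_F² + 3σλ^{2/3}. -/
/-- Euclidean norm of a vector. -/
noncomputable def enorm {m : ℕ} (a : Fin m → ℝ) : ℝ := Real.sqrt (∑ i, (a i) ^ 2)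

/-- Rank-1 three-way outer product tensor. -/
def outer3 {m n k : ℕ} (a : Fin m → ℝ) (b : Fin n → ℝ) (c : Fin k → ℝ) :
    Fin m → Fin n → Fin k → ℝ :=
  fun i j l => a i * b j * c l

/-- Squared Frobenius norm of a three-way tensor. -/
def frobSq3 {m n k : ℕ} (X : Fin m → Fin n → Fin k → ℝ) : ℝ :=
  ∑ i, ∑ j, ∑ l, (X i j l) ^ 2

lemma enorm_nonneg' {m : ℕ} (a : Fin m → ℝ) : 0 ≤ _root_.enorm a := Real.sqrt_nonneg _

lemma enorm_sq' {m : ℕ} (a : Fin m → ℝ) : _root_.enorm a ^ 2 = ∑ i, (a i) ^ 2 :=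
  Real.sq_sqrt (Finset.sum_nonneg fun _ _ => sq_nonneg _)

lemma enorm_smul' {m : ℕ} (t : ℝ) (a : Fin m → ℝ) :
    _root_.enorm (fun i => t * a i) = |t| * _root_.enorm a := by
  unfold _root_.enorm
  rw [← Real.sqrt_sq_eq_abs, ← Real.sqrt_mul (sq_nonneg t), Finset.mul_sum]
  congr 1; apply Finset.sum_congr rfl; intro i _; ring

lemma enorm_eq_zero_fin {m : ℕ} (a : Fin m → ℝ) (h : _root_.enorm a = 0) : ∀ i, a i = 0 := by
  intro i
  have hs : ∑ j, (a j) ^ 2 = 0 :=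
    (Real.sqrt_eq_zero (Finset.sum_nonneg fun _ _ => sq_nonneg _)).mp h
  have := (Finset.sum_eq_zero_iff_of_nonneg (fun j _ => sq_nonneg (a j))).mp hs i (Finset.mem_univ i)
  exact pow_eq_zero_iff (by norm_num) |>.mp this

lemma amgm3 (x y z : ℝ) (hx : 0 ≤ x) (hy : 0 ≤ y) (hz : 0 ≤ z) :
    3 * (x * y * z) ^ ((2:ℝ)/3) ≤ x ^ 2 + y ^ 2 + z ^ 2 := by
  have h := Real.geom_mean_le_arith_mean3_weighted (by norm_num : (0:ℝ) ≤ 1/3)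
    (by norm_num : (0:ℝ) ≤ 1/3) (by norm_num : (0:ℝ) ≤ 1/3)
    (sq_nonneg x) (sq_nonneg y) (sq_nonneg z) (by norm_num)
  have h1 : ∀ w : ℝ, 0 ≤ w → (w^2) ^ ((1:ℝ)/3) = w ^ ((2:ℝ)/3) := by
    intro w hw
    rw [← Real.rpow_natCast w 2, ← Real.rpow_mul hw]
    norm_num
  have h2 : (x * y * z) ^ ((2:ℝ)/3) = x ^ ((2:ℝ)/3) * y ^ ((2:ℝ)/3) * z ^ ((2:ℝ)/3) := by
    rw [Real.mul_rpow (by positivity) hz, Real.mul_rpow hx hy]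
  rw [h1 x hx, h1 y hy, h1 z hz] at h
  rw [h2]
  linarith

lemma frobSq3_nonneg {m n k : ℕ} (X : Fin m → Fin n → Fin k → ℝ) : 0 ≤ frobSq3 X :=
  Finset.sum_nonneg fun _ _ => Finset.sum_nonneg fun _ _ => Finset.sum_nonneg fun _ _ => sq_nonneg _

theorem stmt7 {m n k : ℕ} (X : Fin m → Fin n → Fin k → ℝ) (σ : ℝ) (hσ : 0 < σ) :
    sInf {v : ℝ | ∃ (a : Fin m → ℝ) (b : Fin n → ℝ) (c : Fin k → ℝ),
        v = frobSq3 (fun i j l => X i j l - outer3 a b c i j l) +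
          σ * (_root_.enorm a ^ 2 + _root_.enorm b ^ 2 + _root_.enorm c ^ 2)} =
    sInf {v : ℝ | ∃ (lam : ℝ) (a : Fin m → ℝ) (b : Fin n → ℝ) (c : Fin k → ℝ),
        0 ≤ lam ∧ _root_.enorm a = 1 ∧ _root_.enorm b = 1 ∧ _root_.enorm c = 1 ∧
        v = frobSq3 (fun i j l => X i j l - lam * outer3 a b c i j l) +
          3 * σ * lam ^ ((2 : ℝ) / 3)} := by
  set S1 : Set ℝ := {v : ℝ | ∃ (a : Fin m → ℝ) (b : Fin n → ℝ) (c : Fin k → ℝ),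
        v = frobSq3 (fun i j l => X i j l - outer3 a b c i j l) +
          σ * (_root_.enorm a ^ 2 + _root_.enorm b ^ 2 + _root_.enorm c ^ 2)} with hS1
  set S2 : Set ℝ := {v : ℝ | ∃ (lam : ℝ) (a : Fin m → ℝ) (b : Fin n → ℝ) (c : Fin k → ℝ),
        0 ≤ lam ∧ _root_.enorm a = 1 ∧ _root_.enorm b = 1 ∧ _root_.enorm c = 1 ∧
        v = frobSq3 (fun i j l => X i j l - lam * outer3 a b c i j l) +
          3 * σ * lam ^ ((2 : ℝ) / 3)} with hS2
  have hbdd1 : BddBelow S1 := by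
    refine ⟨0, fun v hv => ?_⟩
    obtain ⟨a, b, c, hv⟩ := hv
    rw [hv]
    have h1 : 0 ≤ _root_.enorm a ^ 2 + _root_.enorm b ^ 2 + _root_.enorm c ^ 2 := by positivity
    have := frobSq3_nonneg (fun i j l => X i j l - outer3 a b c i j l)
    nlinarith
  have hbdd2 : BddBelow S2 := by
    refine ⟨0, fun v hv => ?_⟩
    obtain ⟨lam, a, b, c, hlam, _, _, _, hv⟩ := hv
    rw [hv]
    have h1 : 0 ≤ lam ^ ((2:ℝ)/3) := Real.rpow_nonneg hlam _
    have := frobSq3_nonneg (fun i j l => X i j l - lam * outer3 a b c i j l)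
    nlinarith
  have hne1 : S1.Nonempty := ⟨_, 0, 0, 0, rfl⟩
  -- S2 ⊆ S1
  have hsub : S2 ⊆ S1 := by
    intro v hv
    obtain ⟨lam, a, b, c, hlam, ha, hb, hc, hv⟩ := hv
    set t : ℝ := lam ^ ((1:ℝ)/3) with htdef
    have ht : 0 ≤ t := Real.rpow_nonneg hlam _
    have ht3 : t * t * t = lam := by
      have : t * t * t = t ^ (3:ℕ) := by ring
      rw [this, ← Real.rpow_natCast t 3, htdef, ← Real.rpow_mul hlam]
      norm_num
    have ht2 : t ^ 2 = lam ^ ((2:ℝ)/3) := by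
      rw [← Real.rpow_natCast t 2, htdef, ← Real.rpow_mul hlam]
      norm_num
    refine ⟨fun i => t * a i, fun j => t * b j, fun l => t * c l, ?_⟩
    rw [hv]
    congr 1
    · congr 1
      funext i j l
      show X i j l - lam * (a i * b j * c l) = X i j l - (t * a i) * (t * b j) * (t * c l)
      rw [← ht3]; ring
    · rw [enorm_smul', enorm_smul', enorm_smul', ha, hb, hc, abs_of_nonneg ht,
        mul_one, ht2]
      ring
  by_cases hdeg : m = 0 ∨ n = 0 ∨ k = 0
  · -- degenerate: S2 empty, both infima 0
    have hS2e : S2 = ∅ := by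
      rw [Set.eq_empty_iff_forall_notMem]
      rintro v ⟨lam, a, b, c, _, ha, hb, hc, _⟩
      rcases hdeg with h | h | h
      · subst h; simp [_root_.enorm] at ha
      · subst h; simp [_root_.enorm] at hb
      · subst h; simp [_root_.enorm] at hc
    have h0mem : (0:ℝ) ∈ S1 := by
      refine ⟨0, 0, 0, ?_⟩
      have hfz : frobSq3 (fun i j l => X i j l - outer3 (0 : Fin m → ℝ) 0 0 i j l) = 0 := by
        rcases hdeg with h | h | h <;> subst h <;> simp [frobSq3]
      have hez : ∀ {p : ℕ}, _root_.enorm (0 : Fin p → ℝ) = 0 := by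
        intro p; simp [_root_.enorm]
      rw [hfz, hez, hez, hez]
      ring
    have : sInf S1 = 0 := le_antisymm (csInf_le hbdd1 h0mem) (le_csInf ⟨0, h0mem⟩ (by
      rintro v ⟨a, b, c, hv⟩
      rw [hv]
      have h1 : 0 ≤ _root_.enorm a ^ 2 + _root_.enorm b ^ 2 + _root_.enorm c ^ 2 := by positivity
      have := frobSq3_nonneg (fun i j l => X i j l - outer3 a b c i j l)
      nlinarith))
    rw [this, hS2e, Real.sInf_empty]
  · push_neg at hdeg
    obtain ⟨hm, hn, hk⟩ := hdeg
    have hm' : 0 < m := Nat.pos_of_ne_zero hm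
    have hn' : 0 < n := Nat.pos_of_ne_zero hn
    have hk' : 0 < k := Nat.pos_of_ne_zero hk
    -- unit basis vectors
    have eunit : ∀ (p : ℕ) (hp : 0 < p), ∃ e : Fin p → ℝ, _root_.enorm e = 1 := by
      intro p hp
      refine ⟨fun i => if i = ⟨0, hp⟩ then 1 else 0, ?_⟩
      unfold _root_.enorm
      have : ∑ i : Fin p, ((if i = ⟨0, hp⟩ then (1:ℝ) else 0)) ^ 2 = 1 := by
        rw [Finset.sum_eq_single ⟨0, hp⟩]
        · simp
        · intro i _ hi; simp [hi]
        · simp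
      rw [this, Real.sqrt_one]
    obtain ⟨ea, hea⟩ := eunit m hm'
    obtain ⟨eb, heb⟩ := eunit n hn'
    obtain ⟨ec, hec⟩ := eunit k hk'
    have hXmem : frobSq3 X ∈ S2 := by
      refine ⟨0, ea, eb, ec, le_refl 0, hea, heb, hec, ?_⟩
      have h1 : (fun i j l => X i j l - 0 * outer3 ea eb ec i j l) = X := by
        funext i j l; ring
      rw [h1, Real.zero_rpow (by norm_num : ((2:ℝ)/3) ≠ 0), mul_zero, add_zero]
    have hne2 : S2.Nonempty := ⟨_, hXmem⟩
    apply le_antisymm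
    · exact csInf_le_csInf hbdd1 hne2 hsub
    · apply le_csInf hne1
      rintro v ⟨a, b, c, hv⟩
      set A := _root_.enorm a with hA
      set B := _root_.enorm b with hB
      set C := _root_.enorm c with hC
      have hA0 : 0 ≤ A := enorm_nonneg' a
      have hB0 : 0 ≤ B := enorm_nonneg' b
      have hC0 : 0 ≤ C := enorm_nonneg' c
      by_cases hz : A * B * C = 0
      · -- some factor is zero, outer product vanishes
        have houter : ∀ i j l, outer3 a b c i j l = 0 := by
          intro i j l
          unfold outer3
          rcases mul_eq_zero.mp hz with h | h
          · rcases mul_eq_zero.mp h with h | h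
            · rw [enorm_eq_zero_fin a h i]; ring
            · rw [enorm_eq_zero_fin b h j]; ring
          · rw [enorm_eq_zero_fin c h l]; ring
        have hfr : frobSq3 (fun i j l => X i j l - outer3 a b c i j l) = frobSq3 X := by
          congr 1; funext i j l; rw [houter i j l]; ring
        calc sInf S2 ≤ frobSq3 X := csInf_le hbdd2 hXmem
        _ ≤ v := by
            rw [hv, hfr]
            have h1 : 0 ≤ A ^ 2 + B ^ 2 + C ^ 2 := by positivity
            nlinarith
      · -- all positive: normalize
        have hAp : 0 < A := lt_of_le_of_ne hA0 (by rintro h; exact hz (by rw [← h]; ring))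
        have hBp : 0 < B := by
          rcases lt_or_eq_of_le hB0 with h | h
          · exact h
          · exact absurd (by rw [← h]; ring) hz
        have hCp : 0 < C := by
          rcases lt_or_eq_of_le hC0 with h | h
          · exact h
          · exact absurd (by rw [← h]; ring) hz
        set lam := A * B * C with hlamdef
        have hlam0 : 0 ≤ lam := by positivity
        have hmem : frobSq3 (fun i j l => X i j l - outer3 a b c i j l) +
            3 * σ * lam ^ ((2:ℝ)/3) ∈ S2 := by
          refine ⟨lam, fun i => A⁻¹ * a i, fun j => B⁻¹ * b j, fun l => C⁻¹ * c l,
            hlam0, ?_, ?_, ?_, ?_⟩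
          · rw [enorm_smul', ← hA, abs_of_nonneg (by positivity), inv_mul_cancel₀ hAp.ne']
          · rw [enorm_smul', ← hB, abs_of_nonneg (by positivity), inv_mul_cancel₀ hBp.ne']
          · rw [enorm_smul', ← hC, abs_of_nonneg (by positivity), inv_mul_cancel₀ hCp.ne']
          · congr 2
            funext i j l
            show X i j l - outer3 a b c i j l =
              X i j l - lam * ((A⁻¹ * a i) * (B⁻¹ * b j) * (C⁻¹ * c l))
            unfold outer3
            rw [hlamdef]
            field_simp
        calc sInf S2 ≤ frobSq3 (fun i j l => X i j l - outer3 a b c i j l) +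
            3 * σ * lam ^ ((2:ℝ)/3) := csInf_le hbdd2 hmem
        _ ≤ v := by
            rw [hv]
            have hamgm := amgm3 A B C hA0 hB0 hC0
            have : 3 * σ * lam ^ ((2:ℝ)/3) ≤ σ * (A ^ 2 + B ^ 2 + C ^ 2) := by
              rw [hlamdef]
              nlinarith
            linarith
end

section
/- Let 𝒳 be an N-way tensor and σ > 0, and consider rank-R CP approximations. Then min over factor matrices A₁, ..., A_N (each with R columns) of ‖𝒳 − Σ_{r=1}^R a_{1r}∘⋯∘a_{Nr}‖_F² + σ Σ_{i=1}^N ‖A_i‖_F² equals min over nonnegative weights λ₁, ..., λ_R and normalized factor matrices Ã₁, ..., Ã_N (all columns of unit Euclidean norm) of ‖𝒳 − Σ_{r=1}^R λ_r ã_{1r}∘⋯∘ã_{Nr}‖_F² + Nσ Σ_{r=1}^R λ_r^{2/N}. -/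
/-- Euclidean norm of a vector. -/
noncomputable def vecEnorm {m : ℕ} (a : Fin m → ℝ) : ℝ := Real.sqrt (∑ i, (a i) ^ 2)

theorem stmt8 {N R : ℕ} {I : Fin N → ℕ} (X : ((i : Fin N) → Fin (I i)) → ℝ)
    (σ : ℝ) (hσ : 0 < σ) (hN : 0 < N) :
    sInf {v : ℝ | ∃ A : (i : Fin N) → (Fin (I i) → Fin R → ℝ),
        v = (∑ idx : (i : Fin N) → Fin (I i),
              (X idx - ∑ r : Fin R, ∏ i, A i (idx i) r) ^ 2) +
            σ * ∑ i, ∑ j, ∑ r, (A i j r) ^ 2} =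
    sInf {v : ℝ | ∃ (lam : Fin R → ℝ) (A : (i : Fin N) → (Fin (I i) → Fin R → ℝ)),
        (∀ r, 0 ≤ lam r) ∧ (∀ i r, vecEnorm (fun j => A i j r) = 1) ∧
        v = (∑ idx : (i : Fin N) → Fin (I i),
              (X idx - ∑ r : Fin R, lam r * ∏ i, A i (idx i) r) ^ 2) +
            (N : ℝ) * σ * ∑ r, (lam r) ^ ((2 : ℝ) / N)} := by
  classical
  have hNR : (0:ℝ) < (N:ℝ) := by exact_mod_cast hN
  have hNne : (N:ℝ) ≠ 0 := ne_of_gt hNR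
  set S1 : Set ℝ := {v : ℝ | ∃ A : (i : Fin N) → (Fin (I i) → Fin R → ℝ),
        v = (∑ idx : (i : Fin N) → Fin (I i),
              (X idx - ∑ r : Fin R, ∏ i, A i (idx i) r) ^ 2) +
            σ * ∑ i, ∑ j, ∑ r, (A i j r) ^ 2} with hS1
  set S2 : Set ℝ := {v : ℝ | ∃ (lam : Fin R → ℝ) (A : (i : Fin N) → (Fin (I i) → Fin R → ℝ)),
        (∀ r, 0 ≤ lam r) ∧ (∀ i r, vecEnorm (fun j => A i j r) = 1) ∧
        v = (∑ idx : (i : Fin N) → Fin (I i),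
              (X idx - ∑ r : Fin R, lam r * ∏ i, A i (idx i) r) ^ 2) +
            (N : ℝ) * σ * ∑ r, (lam r) ^ ((2 : ℝ) / N)} with hS2
  -- nonnegativity of all elements
  have h1nn : ∀ v ∈ S1, (0:ℝ) ≤ v := by
    rintro v ⟨A, rfl⟩
    have h1 : (0:ℝ) ≤ ∑ idx : (i : Fin N) → Fin (I i),
        (X idx - ∑ r : Fin R, ∏ i, A i (idx i) r) ^ 2 :=
      Finset.sum_nonneg fun _ _ => sq_nonneg _
    have h2 : (0:ℝ) ≤ ∑ i, ∑ j, ∑ r, (A i j r) ^ 2 :=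
      Finset.sum_nonneg fun _ _ => Finset.sum_nonneg fun _ _ =>
        Finset.sum_nonneg fun _ _ => sq_nonneg _
    positivity
  have h2nn : ∀ v ∈ S2, (0:ℝ) ≤ v := by
    rintro v ⟨lam, A, hlam, _, rfl⟩
    have h1 : (0:ℝ) ≤ ∑ idx : (i : Fin N) → Fin (I i),
        (X idx - ∑ r : Fin R, lam r * ∏ i, A i (idx i) r) ^ 2 :=
      Finset.sum_nonneg fun _ _ => sq_nonneg _
    have h2 : (0:ℝ) ≤ ∑ r, (lam r) ^ ((2 : ℝ) / N) :=
      Finset.sum_nonneg fun r _ => Real.rpow_nonneg (hlam r) _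
    positivity
  have hb1 : BddBelow S1 := ⟨0, fun v hv => h1nn v hv⟩
  have hb2 : BddBelow S2 := ⟨0, fun v hv => h2nn v hv⟩
  -- S1 is nonempty
  have hne1 : S1.Nonempty := by
    refine ⟨_, ⟨fun _ _ _ => 0, rfl⟩⟩
  by_cases hall : ∀ i, 0 < I i
  · -- main case: all dimensions positive
    -- direction 1 : S2 ⊆ S1
    have hsub : S2 ⊆ S1 := by
      rintro v ⟨lam, A, hlam, hnorm, rfl⟩
      refine ⟨fun i j r => (lam r) ^ ((1:ℝ)/N) * A i j r, ?_⟩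
      have hcol : ∀ i r, ∑ j, (A i j r) ^ 2 = 1 := by
        intro i r
        have := hnorm i r
        rw [vecEnorm, Real.sqrt_eq_one] at this
        exact this
      have hpow : ∀ r, ((lam r) ^ ((1:ℝ)/N)) ^ N = lam r := by
        intro r
        rw [← Real.rpow_natCast ((lam r) ^ ((1:ℝ)/N)) N, ← Real.rpow_mul (hlam r)]
        rw [one_div, inv_mul_cancel₀ hNne, Real.rpow_one]
      have hprod : ∀ (idx : (i : Fin N) → Fin (I i)) (r : Fin R),
          ∏ i, ((lam r) ^ ((1:ℝ)/N) * A i (idx i) r) = lam r * ∏ i, A i (idx i) r := by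
        intro idx r
        rw [Finset.prod_mul_distrib, Finset.prod_const, Finset.card_univ, Fintype.card_fin,
          hpow r]
      have hpen : ∑ i, ∑ j, ∑ r, ((lam r) ^ ((1:ℝ)/N) * A i j r) ^ 2
          = (N:ℝ) * ∑ r, (lam r) ^ ((2:ℝ)/N) := by
        have hterm : ∀ i : Fin N, ∑ j, ∑ r, ((lam r) ^ ((1:ℝ)/N) * A i j r) ^ 2
            = ∑ r, (lam r) ^ ((2:ℝ)/N) := by
          intro i
          rw [Finset.sum_comm]
          refine Finset.sum_congr rfl fun r _ => ?_
          have hq : ((lam r) ^ ((1:ℝ)/N)) ^ 2 = (lam r) ^ ((2:ℝ)/N) := by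
            rw [← Real.rpow_natCast ((lam r) ^ ((1:ℝ)/N)) 2, ← Real.rpow_mul (hlam r)]
            congr 1
            push_cast
            ring
          have : ∀ j, ((lam r) ^ ((1:ℝ)/N) * A i j r) ^ 2
              = (lam r) ^ ((2:ℝ)/N) * (A i j r) ^ 2 := by
            intro j
            rw [mul_pow, hq]
          simp_rw [this]
          rw [← Finset.mul_sum, hcol i r, mul_one]
        simp_rw [hterm]
        rw [Finset.sum_const, Finset.card_univ, Fintype.card_fin, nsmul_eq_mul]
      simp_rw [hprod]
      rw [hpen]
      ring
    -- S2 nonempty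
    have hne2 : S2.Nonempty := by
      refine ⟨_, ⟨fun _ => 0, fun i j r => if j = ⟨0, hall i⟩ then 1 else 0,
        fun r => le_refl 0, fun i r => ?_, rfl⟩⟩
      rw [vecEnorm]
      have : ∑ j : Fin (I i), (if j = (⟨0, hall i⟩ : Fin (I i)) then (1:ℝ) else 0) ^ 2 = 1 := by
        rw [Finset.sum_eq_single (⟨0, hall i⟩ : Fin (I i))]
        · simp
        · intro b _ hb; simp [hb]
        · simp
      rw [this, Real.sqrt_one]
    refine le_antisymm (csInf_le_csInf hb1 hne2 hsub) (le_csInf hne1 ?_)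
    -- direction 2
    rintro v ⟨A, rfl⟩
    set n : Fin N → Fin R → ℝ := fun i r => Real.sqrt (∑ j, (A i j r) ^ 2) with hn
    have hn0 : ∀ i r, 0 ≤ n i r := fun i r => Real.sqrt_nonneg _
    have hnsq : ∀ i r, (n i r) ^ 2 = ∑ j, (A i j r) ^ 2 := fun i r =>
      Real.sq_sqrt (Finset.sum_nonneg fun _ _ => sq_nonneg _)
    have hAzero : ∀ i r, n i r = 0 → ∀ j, A i j r = 0 := by
      intro i r h j
      have hsum : ∑ j, (A i j r) ^ 2 = 0 := by
        rw [← hnsq i r, h]; ring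
      have := (Finset.sum_eq_zero_iff_of_nonneg (fun j _ => sq_nonneg (A i j r))).mp hsum
      exact sq_eq_zero_iff.mp (this j (Finset.mem_univ j))
    set e : (i : Fin N) → Fin (I i) → ℝ :=
      fun i j => if j = ⟨0, hall i⟩ then 1 else 0 with he
    have hesum : ∀ i, ∑ j, (e i j) ^ 2 = 1 := by
      intro i
      rw [he]
      rw [Finset.sum_eq_single (⟨0, hall i⟩ : Fin (I i))]
      · simp
      · intro b _ hb; simp [hb]
      · simp
    set B : (i : Fin N) → Fin (I i) → Fin R → ℝ :=
      fun i j r => if n i r = 0 then e i j else A i j r / n i r with hB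
    set lam : Fin R → ℝ := fun r => ∏ i, n i r with hlamdef
    have hlam : ∀ r, 0 ≤ lam r := fun r => Finset.prod_nonneg fun i _ => hn0 i r
    have hEnorm : ∀ i r, vecEnorm (fun j => B i j r) = 1 := by
      intro i r
      rw [vecEnorm]
      by_cases h : n i r = 0
      · have hBe : ∀ j, B i j r = e i j := fun j => by rw [hB]; simp [h]
        simp_rw [hBe]
        rw [hesum i, Real.sqrt_one]
      · have hBe : ∀ j, B i j r = A i j r / n i r := fun j => by rw [hB]; simp [h]
        simp_rw [hBe, div_pow]
        rw [← Finset.sum_div, ← hnsq i r, div_self (pow_ne_zero 2 h), Real.sqrt_one]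
    have hprodeq : ∀ (idx : (i : Fin N) → Fin (I i)) (r : Fin R),
        lam r * ∏ i, B i (idx i) r = ∏ i, A i (idx i) r := by
      intro idx r
      rw [hlamdef]
      simp only []
      rw [← Finset.prod_mul_distrib]
      refine Finset.prod_congr rfl fun i _ => ?_
      by_cases h : n i r = 0
      · rw [hB]
        simp [h, hAzero i r h (idx i)]
      · rw [hB]
        simp only [h, if_neg, ite_false]
        field_simp
    have hpen : ∀ r, (N:ℝ) * (lam r) ^ ((2:ℝ)/N) ≤ ∑ i, (n i r) ^ 2 := by
      intro r
      have hw : ∑ _i : Fin N, (1:ℝ)/N = 1 := by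
        rw [Finset.sum_const, Finset.card_univ, Fintype.card_fin, nsmul_eq_mul]
        field_simp
      have hgm := Real.geom_mean_le_arith_mean_weighted Finset.univ (fun _ => 1/(N:ℝ))
        (fun i => (n i r) ^ 2) (fun i _ => by positivity) hw (fun i _ => sq_nonneg _)
      have hL : ∏ i, ((n i r) ^ 2 : ℝ) ^ ((1:ℝ)/N) = (lam r) ^ ((2:ℝ)/N) := by
        have hh : ∀ i, ((n i r) ^ 2 : ℝ) ^ ((1:ℝ)/N) = (n i r) ^ ((2:ℝ)/N) := by
          intro i
          rw [← Real.rpow_natCast (n i r) 2, ← Real.rpow_mul (hn0 i r)]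
          congr 1
          push_cast
          ring
        simp_rw [hh]
        rw [Real.finset_prod_rpow _ _ (fun i _ => hn0 i r), hlamdef]
      rw [hL] at hgm
      calc (N:ℝ) * lam r ^ ((2:ℝ)/N)
          ≤ (N:ℝ) * ∑ i, (1/(N:ℝ)) * (n i r) ^ 2 :=
            mul_le_mul_of_nonneg_left hgm (le_of_lt hNR)
        _ = ∑ i, (n i r) ^ 2 := by
            rw [← Finset.mul_sum, ← mul_assoc]
            field_simp
    refine le_trans (csInf_le hb2 ⟨lam, B, hlam, hEnorm, rfl⟩) ?_
    have hres : (∑ idx : (i : Fin N) → Fin (I i),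
        (X idx - ∑ r : Fin R, lam r * ∏ i, B i (idx i) r) ^ 2)
        = ∑ idx : (i : Fin N) → Fin (I i),
        (X idx - ∑ r : Fin R, ∏ i, A i (idx i) r) ^ 2 := by
      refine Finset.sum_congr rfl fun idx _ => ?_
      congr 1
      congr 1
      exact Finset.sum_congr rfl fun r _ => hprodeq idx r
    have hpenSum : (N:ℝ) * σ * ∑ r, (lam r) ^ ((2:ℝ)/N)
        ≤ σ * ∑ i, ∑ j, ∑ r, (A i j r) ^ 2 := by
      have h1 : ∀ i, ∑ j, ∑ r, (A i j r) ^ 2 = ∑ r, (n i r) ^ 2 := by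
        intro i
        rw [Finset.sum_comm]
        exact Finset.sum_congr rfl fun r _ => (hnsq i r).symm
      simp_rw [h1]
      rw [Finset.sum_comm]
      have h2 : ∑ r, (N:ℝ) * (lam r) ^ ((2:ℝ)/N) ≤ ∑ r, ∑ i, (n i r) ^ 2 :=
        Finset.sum_le_sum fun r _ => hpen r
      calc (N:ℝ) * σ * ∑ r, (lam r) ^ ((2:ℝ)/N)
          = σ * ∑ r, (N:ℝ) * (lam r) ^ ((2:ℝ)/N) := by
            rw [Finset.mul_sum]
            rw [Finset.mul_sum]
            exact Finset.sum_congr rfl fun r _ => by ring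
        _ ≤ σ * ∑ r, ∑ i, (n i r) ^ 2 := by
            exact mul_le_mul_of_nonneg_left h2 (le_of_lt hσ)
    rw [hres]
    exact add_le_add_right hpenSum _
  · -- some dimension is zero : both infima are 0
    push_neg at hall
    obtain ⟨i0, hi0⟩ := hall
    have hi0' : I i0 = 0 := Nat.le_zero.mp (Nat.not_lt.mp (by simpa using hi0))
    haveI hFe : IsEmpty (Fin (I i0)) := by rw [hi0']; infer_instance
    haveI hempty : IsEmpty ((i : Fin N) → Fin (I i)) :=
      ⟨fun f => hFe.false (f i0)⟩
    have hzero1 : (0:ℝ) ∈ S1 := by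
      refine ⟨fun _ _ _ => 0, ?_⟩
      rw [Finset.univ_eq_empty, Finset.sum_empty]
      simp
    have hs1 : sInf S1 = 0 :=
      le_antisymm (csInf_le hb1 hzero1) (le_csInf ⟨0, hzero1⟩ h1nn)
    rw [hs1]
    by_cases hR : R = 0
    · have hzero2 : (0:ℝ) ∈ S2 := by
        subst hR
        refine ⟨fun _ => 0, fun _ _ _ => 0, fun r => r.elim0, fun i r => r.elim0, ?_⟩
        rw [Finset.univ_eq_empty, Finset.sum_empty]
        simp
      exact (le_antisymm (csInf_le hb2 hzero2) (le_csInf ⟨0, hzero2⟩ h2nn)).symm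
    · have hS2e : S2 = ∅ := by
        ext v
        simp only [Set.mem_empty_iff_false, iff_false]
        rintro ⟨lam, A, hlam, hnorm, hv⟩
        have hne := hnorm i0 ⟨0, Nat.pos_of_ne_zero hR⟩
        rw [vecEnorm, Finset.univ_eq_empty, Finset.sum_empty, Real.sqrt_zero] at hne
        exact absurd hne (by norm_num)
      rw [hS2e, Real.sInf_empty]
end

section
/- Let N > 2, σ > 0, and λ̂ ≥ 0. The function g(λ) = (λ − λ̂)² + Nσλ^{2/N} on [0, ∞) has a minimizer λ* satisfying λ* < λ̂ whenever λ̂ > 0; moreover there exists a threshold t(σ, N) > 0 such that λ* = 0 whenever λ̂ ≤ t(σ, N). -/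
theorem stmt9 (N : ℕ) (hN : 2 < N) (σ : ℝ) (hσ : 0 < σ) :
    ∃ t : ℝ, 0 < t ∧
      ∀ lamhat : ℝ, 0 ≤ lamhat →
        ∃ lamstar : ℝ, 0 ≤ lamstar ∧
          (∀ lam : ℝ, 0 ≤ lam →
            (lamstar - lamhat) ^ 2 + (N : ℝ) * σ * lamstar ^ ((2 : ℝ) / N) ≤
              (lam - lamhat) ^ 2 + (N : ℝ) * σ * lam ^ ((2 : ℝ) / N)) ∧
          (0 < lamhat → lamstar < lamhat) ∧
          (lamhat ≤ t → lamstar = 0) := by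
  have hN0 : (0 : ℝ) < N := by positivity
  set p : ℝ := (2 : ℝ) / N with hp_def
  have hp0 : 0 < p := by positivity
  have hp1 : p < 1 := by
    rw [hp_def, div_lt_one hN0]
    exact_mod_cast hN
  refine ⟨min (1 / 2) ((N : ℝ) * σ / 2), by positivity, ?_⟩
  intro lamhat hl
  by_cases hcase : lamhat ≤ min (1 / 2) ((N : ℝ) * σ / 2)
  · -- below threshold: λ* = 0
    refine ⟨0, le_refl 0, ?_, fun h => h, fun _ => rfl⟩
    intro lam hlam
    rw [Real.zero_rpow hp0.ne']
    have h1 : lamhat ≤ 1 / 2 := hcase.trans (min_le_left _ _)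
    have h2 : lamhat ≤ (N : ℝ) * σ / 2 := hcase.trans (min_le_right _ _)
    rcases eq_or_lt_of_le hlam with rfl | hlam
    · simp [Real.zero_rpow hp0.ne']
    have hpow : 0 ≤ (N : ℝ) * σ * lam ^ p := by positivity
    rcases le_or_gt 1 lam with hl1 | hl1
    · nlinarith [sq_nonneg lam, mul_le_mul_of_nonneg_left h1 (le_of_lt hlam)]
    · have hle : lam ≤ lam ^ p := by
        have := Real.rpow_le_rpow_of_exponent_ge hlam hl1.le hp1.le
        rwa [Real.rpow_one] at this
      nlinarith [mul_le_mul_of_nonneg_left hle (by positivity : (0:ℝ) ≤ (N:ℝ) * σ),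
        mul_le_mul_of_nonneg_left h2 (le_of_lt hlam)]
  · -- above threshold
    push_neg at hcase
    have hl0 : 0 < lamhat := lt_of_le_of_lt (by positivity) hcase
    set g : ℝ → ℝ := fun x => (x - lamhat) ^ 2 + (N : ℝ) * σ * x ^ p with hg
    have hgc : Continuous g := by
      apply Continuous.add
      · exact (continuous_id.sub continuous_const).pow 2
      · exact continuous_const.mul (Real.continuous_rpow_const hp0.le)
    obtain ⟨c, hcmem, hcmin⟩ :=
      (isCompact_Icc (a := (0:ℝ)) (b := lamhat)).exists_isMinOn
        (Set.nonempty_Icc.mpr hl) hgc.continuousOn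
    have hmin : ∀ x ∈ Set.Icc (0:ℝ) lamhat, g c ≤ g x := fun x hx => hcmin hx
    -- strict witness: λ̂ - ε
    set ε : ℝ := min (lamhat / 2) (σ * lamhat ^ (p - 1)) with hε_def
    have hrp : 0 < lamhat ^ (p - 1) := Real.rpow_pos_of_pos hl0 _
    have hε0 : 0 < ε := lt_min (by positivity) (by positivity)
    have hε1 : ε ≤ lamhat / 2 := min_le_left _ _
    have hε2 : ε ≤ σ * lamhat ^ (p - 1) := min_le_right _ _
    have hεlam : ε ≤ lamhat := hε1.trans (by linarith)
    have hdiv : ε / lamhat ≤ 1 := (div_le_one hl0).mpr hεlam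
    -- Bernoulli bound
    have hkey : lamhat ^ p / lamhat = lamhat ^ (p - 1) := by
      rw [Real.rpow_sub hl0, Real.rpow_one]
    have hfrac : (-1 : ℝ) ≤ -(ε / lamhat) := by linarith
    have hb := rpow_one_add_le_one_add_mul_self hfrac hp0.le hp1.le
    have h1 : lamhat - ε = lamhat * (1 + -(ε / lamhat)) := by field_simp; ring
    have h2 : (lamhat - ε) ^ p = lamhat ^ p * (1 + -(ε / lamhat)) ^ p := by
      rw [h1, Real.mul_rpow hl0.le (by linarith [hdiv])]
    have hbern : (lamhat - ε) ^ p ≤ lamhat ^ p - p * lamhat ^ (p - 1) * ε := by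
      rw [h2]
      have h3 : lamhat ^ p * (1 + -(ε / lamhat)) ^ p ≤ lamhat ^ p * (1 + p * -(ε / lamhat)) :=
        mul_le_mul_of_nonneg_left hb (Real.rpow_nonneg hl0.le _)
      have h4 : lamhat ^ p * (1 + p * -(ε / lamhat)) = lamhat ^ p - p * lamhat ^ (p - 1) * ε := by
        rw [← hkey]; field_simp; ring
      linarith [h3, h4.le, h4.ge]
    have hNp : (N : ℝ) * σ * p = 2 * σ := by
      rw [hp_def]; field_simp
    -- g (lamhat - ε) < g lamhat
    have hstrict : g (lamhat - ε) < g lamhat := by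
      have hgε : g (lamhat - ε) = ε ^ 2 + (N : ℝ) * σ * (lamhat - ε) ^ p := by
        simp only [hg]; ring_nf
      have hglh : g lamhat = (N : ℝ) * σ * lamhat ^ p := by
        simp only [hg]; ring_nf
      rw [hgε, hglh]
      have hbb : (N : ℝ) * σ * (lamhat - ε) ^ p ≤
          (N : ℝ) * σ * lamhat ^ p - 2 * σ * lamhat ^ (p - 1) * ε := by
        have hA := mul_le_mul_of_nonneg_left hbern (by positivity : (0:ℝ) ≤ (N:ℝ) * σ)
        have hB : (N:ℝ) * σ * (lamhat ^ p - p * lamhat ^ (p - 1) * ε)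
            = (N:ℝ) * σ * lamhat ^ p - ((N:ℝ) * σ * p) * (lamhat ^ (p - 1) * ε) := by ring
        rw [hB, hNp] at hA
        linarith
      nlinarith [mul_le_mul_of_nonneg_left hε2 hε0.le, mul_pos (mul_pos hσ hrp) hε0]
    have hclt : c < lamhat := by
      have h5 : g c ≤ g (lamhat - ε) :=
        hmin _ ⟨by linarith, by linarith⟩
      have h6 : g c < g lamhat := h5.trans_lt hstrict
      exact lt_of_le_of_ne hcmem.2 (fun h => by rw [h] at h6; exact lt_irrefl _ h6)
    refine ⟨c, hcmem.1, ?_, fun _ => hclt, fun h => absurd h (not_le.mpr hcase)⟩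
    intro lam hlam
    rcases le_or_gt lam lamhat with hll | hll
    · exact hmin lam ⟨hlam, hll⟩
    · have h7 : g c ≤ g lamhat := hmin lamhat ⟨hl, le_refl _⟩
      have h8 : g lamhat ≤ g lam := by
        have h9 : lamhat ^ p ≤ lam ^ p := Real.rpow_le_rpow hl hll.le hp0.le
        have h10 := mul_le_mul_of_nonneg_left h9 (by positivity : (0:ℝ) ≤ (N:ℝ)*σ)
        have h11 : (lamhat - lamhat) ^ 2 = 0 := by ring
        have h12 : (0:ℝ) ≤ (lam - lamhat) ^ 2 := sq_nonneg _
        simp only [hg]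
        linarith
      exact h7.trans h8
end

section
/- Let 𝒳 be an N-way tensor and suppose (λ̂, â₁, ..., â_N) with λ̂ ≥ 0 and unit vectors â_i minimizes ‖𝒳 − λ â₁∘⋯∘â_N‖_F² over λ ≥ 0 and unit vectors. Then for any σ > 0, a minimizer of the penalized rank-1 problem ‖𝒳 − λ a₁∘⋯∘a_N‖_F² + Nσλ^{2/N} over λ ≥ 0 and unit vectors a₁, ..., a_N is given by (λ̂_p, â₁, ..., â_N), where λ̂_p = argmin_{λ ≥ 0} (λ − λ̂)² + Nσλ^{2/N}. -/
/-- Squared Frobenius norm of the residual of a rank-1 CP approximation of an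
N-way tensor with weight `lam` and factor vectors `a i`. -/
def resid {N : ℕ} {I : Fin N → ℕ} (X : ((i : Fin N) → Fin (I i)) → ℝ)
    (lam : ℝ) (a : (i : Fin N) → Fin (I i) → ℝ) : ℝ :=
  ∑ idx : (i : Fin N) → Fin (I i), (X idx - lam * ∏ i, a i (idx i)) ^ 2

lemma sum_sq_of_enorm_one {m : ℕ} {a : Fin m → ℝ} (h : _root_.enorm a = 1) :
    ∑ i, (a i) ^ 2 = 1 := by
  have h0 : (0:ℝ) ≤ ∑ i, (a i) ^ 2 := Finset.sum_nonneg fun i _ => sq_nonneg _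
  have := congrArg (fun x => x ^ 2) h
  simpa [_root_.enorm, Real.sq_sqrt h0] using this

lemma resid_expand {N : ℕ} {I : Fin N → ℕ} (X : ((i : Fin N) → Fin (I i)) → ℝ)
    (lam : ℝ) (a : (i : Fin N) → Fin (I i) → ℝ) (hu : ∀ i, _root_.enorm (a i) = 1) :
    resid X lam a = (∑ idx, X idx ^ 2)
      - 2 * lam * (∑ idx, X idx * ∏ i, a i (idx i)) + lam ^ 2 := by
  have hprod : ∏ i, ∑ j, a i j ^ 2 = (1:ℝ) :=
    Finset.prod_eq_one fun i _ => sum_sq_of_enorm_one (hu i)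
  have h : (∑ idx : (i : Fin N) → Fin (I i), ∏ i, a i (idx i) ^ 2) = 1 := by
    rw [← hprod, Finset.prod_univ_sum, Fintype.piFinset_univ]
  have expand : resid X lam a = (∑ idx, X idx ^ 2)
      - 2 * lam * (∑ idx, X idx * ∏ i, a i (idx i))
      + lam ^ 2 * (∑ idx : (i : Fin N) → Fin (I i), ∏ i, a i (idx i) ^ 2) := by
    rw [resid, Finset.mul_sum, Finset.mul_sum, ← Finset.sum_sub_distrib,
      ← Finset.sum_add_distrib]
    refine Finset.sum_congr rfl fun idx _ => ?_
    rw [Finset.prod_pow]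
    ring
  rw [expand, h, mul_one]

theorem stmt10 {N : ℕ} {I : Fin N → ℕ} (X : ((i : Fin N) → Fin (I i)) → ℝ)
    (lamhat : ℝ) (ahat : (i : Fin N) → Fin (I i) → ℝ)
    (hlam : 0 ≤ lamhat) (hunit : ∀ i, _root_.enorm (ahat i) = 1)
    (hmin : ∀ (lam : ℝ) (a : (i : Fin N) → Fin (I i) → ℝ),
      0 ≤ lam → (∀ i, _root_.enorm (a i) = 1) → resid X lamhat ahat ≤ resid X lam a)
    (σ : ℝ) (hσ : 0 < σ)
    (lamp : ℝ) (hlamp : 0 ≤ lamp)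
    (hlampmin : ∀ lam : ℝ, 0 ≤ lam →
      (lamp - lamhat) ^ 2 + (N : ℝ) * σ * lamp ^ ((2 : ℝ) / N) ≤
        (lam - lamhat) ^ 2 + (N : ℝ) * σ * lam ^ ((2 : ℝ) / N)) :
    ∀ (lam : ℝ) (a : (i : Fin N) → Fin (I i) → ℝ),
      0 ≤ lam → (∀ i, _root_.enorm (a i) = 1) →
      resid X lamp ahat + (N : ℝ) * σ * lamp ^ ((2 : ℝ) / N) ≤
        resid X lam a + (N : ℝ) * σ * lam ^ ((2 : ℝ) / N) := by
  intro lam a hl ha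
  set c : ((i : Fin N) → Fin (I i) → ℝ) → ℝ :=
    fun b => ∑ idx, X idx * ∏ i, b i (idx i) with hc
  -- quadratic form of hmin
  have Q : ∀ (μ : ℝ) (b : (i : Fin N) → Fin (I i) → ℝ), 0 ≤ μ → (∀ i, _root_.enorm (b i) = 1) →
      lamhat ^ 2 - 2 * lamhat * c ahat ≤ μ ^ 2 - 2 * μ * c b := by
    intro μ b hμ hb
    have := hmin μ b hμ hb
    rw [resid_expand X lamhat ahat hunit, resid_expand X μ b hb] at this
    linarith
  -- K1 : lamhat * (lamhat - c ahat) = 0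
  have K1 : lamhat * (lamhat - c ahat) = 0 := by
    rcases le_or_gt 0 (c ahat) with hch | hch
    · have := Q (c ahat) ahat hch hunit
      have hsq : (lamhat - c ahat) ^ 2 ≤ 0 := by nlinarith
      have : lamhat - c ahat = 0 := by nlinarith [sq_nonneg (lamhat - c ahat)]
      rw [this, mul_zero]
    · have h0 := Q 0 ahat le_rfl hunit
      have : lamhat = 0 := by nlinarith
      rw [this, zero_mul]
  -- K2 : c b ≤ lamhat for unit b
  have K2 : ∀ b : (i : Fin N) → Fin (I i) → ℝ, (∀ i, _root_.enorm (b i) = 1) → c b ≤ lamhat := by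
    intro b hb
    rcases le_or_gt (c b) 0 with hcb | hcb
    · linarith
    · have := Q (c b) b hcb.le hb
      nlinarith
  -- K3 : lamp * (lamhat - c ahat) ≤ 0
  have K3 : lamp * (lamhat - c ahat) ≤ 0 := by
    rcases mul_eq_zero.mp K1 with h0 | h0
    · rcases le_or_gt 0 (c ahat) with hch | hch
      · rw [h0]; nlinarith
      · -- lamhat = 0 and c ahat < 0 : show lamp = 0
        have h00 := hlampmin 0 le_rfl
        rw [h0] at h00
        have hle : (0:ℝ) ^ ((2:ℝ)/N) ≤ lamp ^ ((2:ℝ)/N) := by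
          rcases Nat.eq_zero_or_pos N with hN | hN
          · simp [hN]
          · have h2N : (0:ℝ) < (2:ℝ)/N := by positivity
            rw [Real.zero_rpow (ne_of_gt h2N)]
            exact Real.rpow_nonneg hlamp _
        have hN0 : (0:ℝ) ≤ (N : ℝ) * σ := by positivity
        have : lamp ^ 2 ≤ 0 := by nlinarith [mul_le_mul_of_nonneg_left hle hN0]
        have : lamp = 0 := by nlinarith [sq_nonneg lamp]
        rw [this, zero_mul]
    · have : lamhat - c ahat = 0 := by linarith
      rw [this, mul_zero]
  -- combine
  have hq := hlampmin lam hl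
  rw [resid_expand X lamp ahat hunit, resid_expand X lam a ha]
  have hA : 0 ≤ lam * (lamhat - c a) := mul_nonneg hl (by linarith [K2 a ha])
  nlinarith [hq]
end

section
/- Let X ∈ ℝ^{I₁×I₂} have singular values d₁ ≥ ⋯ ≥ d_R and let σ > 0. Then the minimum value of (1/2)‖X − Y‖_F² + σ‖Y‖_* over all matrices Y equals Σ_{r=1}^R [ (1/2)min(d_r, σ)² + σ·max(d_r − σ, 0) ], and the rank of the minimizer Ŷ equals the number of singular values d_r strictly greater than σ. -/
open Matrix

lemma UDV_t_mul {m n R : ℕ} {U : Matrix (Fin m) (Fin R) ℝ} {V : Matrix (Fin n) (Fin R) ℝ}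
    (hU : Uᵀ * U = 1) (c c' : Fin R → ℝ) :
    (U * diagonal c * Vᵀ)ᵀ * (U * diagonal c' * Vᵀ) =
      V * diagonal (fun r => c r * c' r) * Vᵀ := by
  rw [transpose_mul, transpose_mul, transpose_transpose, diagonal_transpose]
  calc V * (diagonal c * Uᵀ) * (U * diagonal c' * Vᵀ)
      = V * (diagonal c * (Uᵀ * U) * diagonal c') * Vᵀ := by simp only [Matrix.mul_assoc]
    _ = V * diagonal (fun r => c r * c' r) * Vᵀ := by
        rw [hU, Matrix.mul_one, diagonal_mul_diagonal]

lemma trace_VDV {n R : ℕ} {V : Matrix (Fin n) (Fin R) ℝ} (hV : Vᵀ * V = 1)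
    (c : Fin R → ℝ) : (V * diagonal c * Vᵀ).trace = ∑ r, c r := by
  rw [trace_mul_cycle, hV, Matrix.one_mul, trace_diagonal]

open scoped MatrixOrder in
lemma nuclearNorm_eq_trace_sqrt {m n : ℕ} (Y : Matrix (Fin m) (Fin n) ℝ) :
    nuclearNorm Y = (CFC.sqrt (Yᴴ * Y)).trace := by
  have hA := posSemidef_conjTranspose_mul_self Y
  rw [CFC.sqrt_eq_cfc, cfc_nnreal_eq_real _ (Yᴴ * Y), hA.1.cfc_eq]
  simp only [IsHermitian.cfc, Unitary.conjStarAlgAut_apply]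
  rw [trace_mul_cycle, show (star (hA.1.eigenvectorUnitary) :
      Matrix (Fin n) (Fin n) ℝ) * (hA.1.eigenvectorUnitary :
      Matrix (Fin n) (Fin n) ℝ) = 1 from Unitary.coe_star_mul_self _, Matrix.one_mul,
    trace_diagonal]
  simp [nuclearNorm, RCLike.ofReal_real_eq_id, Real.coe_sqrt, Real.coe_toNNReal']
  refine Finset.sum_congr rfl fun i _ => ?_
  congr 1
  exact (max_eq_left (hA.eigenvalues_nonneg i)).symm

open scoped MatrixOrder in
lemma nuclearNorm_UDV {m n R : ℕ} {U : Matrix (Fin m) (Fin R) ℝ} {V : Matrix (Fin n) (Fin R) ℝ}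
    (hU : Uᵀ * U = 1) (hV : Vᵀ * V = 1) (c : Fin R → ℝ) (hc : ∀ r, 0 ≤ c r) :
    nuclearNorm (U * diagonal c * Vᵀ) = ∑ r, c r := by
  set Y := U * diagonal c * Vᵀ with hY
  have hP : Matrix.PosSemidef (Yᴴ * Y) := posSemidef_conjTranspose_mul_self Y
  set S := V * diagonal c * Vᵀ with hS
  have hB : V * diagonal (fun r => Real.sqrt (c r)) *
      (V * diagonal (fun r => Real.sqrt (c r)))ᴴ = S := by
    rw [conjTranspose_eq_transpose_of_trivial, transpose_mul, diagonal_transpose]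
    calc V * diagonal (fun r => Real.sqrt (c r)) *
        (diagonal (fun r => Real.sqrt (c r)) * Vᵀ)
        = V * (diagonal (fun r => Real.sqrt (c r)) * diagonal (fun r => Real.sqrt (c r))) * Vᵀ :=
          by simp only [Matrix.mul_assoc]
      _ = S := by
          rw [diagonal_mul_diagonal,
            show (fun r => Real.sqrt (c r) * Real.sqrt (c r)) = c from
              funext fun r => Real.mul_self_sqrt (hc r)]
  have hSpsd : Matrix.PosSemidef S := hB ▸ Matrix.posSemidef_self_mul_conjTranspose _
  have hsq : S ^ 2 = Yᴴ * Y := by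
    rw [conjTranspose_eq_transpose_of_trivial, hY, UDV_t_mul hU, sq, hS]
    calc V * diagonal c * Vᵀ * (V * diagonal c * Vᵀ)
        = V * (diagonal c * (Vᵀ * V) * diagonal c) * Vᵀ := by simp only [Matrix.mul_assoc]
      _ = V * diagonal (fun r => c r * c r) * Vᵀ := by
          rw [hV, Matrix.mul_one, diagonal_mul_diagonal]
  have : S = CFC.sqrt (Yᴴ * Y) :=
    ((CFC.sqrt_eq_iff _ _ hP.nonneg hSpsd.nonneg).mpr (by rw [← sq, hsq])).symm
  rw [nuclearNorm_eq_trace_sqrt, ← this, hS, trace_VDV hV]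

lemma contraction {k R : ℕ} {W : Matrix (Fin k) (Fin R) ℝ} (hW : Wᵀ * W = 1) (x : Fin k → ℝ) :
    ∑ r, ((Wᵀ *ᵥ x) r) ^ 2 ≤ ∑ j, (x j) ^ 2 := by
  set y := Wᵀ *ᵥ x with hy
  have hyy : ∑ r, (y r) ^ 2 = y ⬝ᵥ y := by simp [dotProduct, sq]
  have hxx : ∑ j, (x j) ^ 2 = x ⬝ᵥ x := by simp [dotProduct, sq]
  have hxz : x ⬝ᵥ (W *ᵥ y) = y ⬝ᵥ y := by
    rw [dotProduct_mulVec]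
    congr 1
    rw [hy, mulVec_transpose]
  have hzz : (W *ᵥ y) ⬝ᵥ (W *ᵥ y) = y ⬝ᵥ y := by
    rw [dotProduct_mulVec]
    congr 1
    rw [← mulVec_transpose, mulVec_mulVec, hW, one_mulVec]
  have h0 : 0 ≤ (x - W *ᵥ y) ⬝ᵥ (x - W *ᵥ y) :=
    Finset.sum_nonneg fun i _ => mul_self_nonneg _
  have hexp : (x - W *ᵥ y) ⬝ᵥ (x - W *ᵥ y) = x ⬝ᵥ x - y ⬝ᵥ y := by
    rw [sub_dotProduct, dotProduct_sub, dotProduct_sub, hzz, hxz,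
      dotProduct_comm (W *ᵥ y) x, hxz]
    ring
  rw [hyy, hxx]
  linarith [hexp ▸ h0]

lemma col_sq_sum {k p : ℕ} (M : Matrix (Fin k) (Fin p) ℝ) (i : Fin p) :
    ∑ j, (M j i) ^ 2 = (Mᵀ * M) i i := by
  simp [mul_apply, sq]

def mdot {m n : ℕ} (A B : Matrix (Fin m) (Fin n) ℝ) : ℝ := ∑ i, ∑ j, A i j * B i j

lemma mdot_eq_trace {m n : ℕ} (A B : Matrix (Fin m) (Fin n) ℝ) :
    mdot A B = (Aᵀ * B).trace := by
  rw [mdot, trace, Finset.sum_comm]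
  simp [Matrix.mul_apply, diag, mul_comm]

lemma dual_bound_s19 {m n R : ℕ} {U : Matrix (Fin m) (Fin R) ℝ} {V : Matrix (Fin n) (Fin R) ℝ}
    (hU : Uᵀ * U = 1) (hV : Vᵀ * V = 1) (c : Fin R → ℝ) {σ : ℝ} (hσ0 : 0 ≤ σ)
    (hc0 : ∀ r, 0 ≤ c r) (hcσ : ∀ r, c r ≤ σ) (Y : Matrix (Fin m) (Fin n) ℝ) :
    mdot (U * diagonal c * Vᵀ) Y ≤ σ * nuclearNorm Y := by
  set G := U * diagonal c * Vᵀ with hG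
  set hH := Matrix.isHermitian_conjTranspose_mul_self Y with hHdef
  set Q : Matrix (Fin n) (Fin n) ℝ := (hH.eigenvectorUnitary : Matrix (Fin n) (Fin n) ℝ) with hQdef
  have hQ1 : Qᵀ * Q = 1 := by
    have := Unitary.coe_star_mul_self hH.eigenvectorUnitary
    simpa [hQdef, Matrix.star_eq_conjTranspose, conjTranspose_eq_transpose_of_trivial] using this
  have hQ2 : Q * Qᵀ = 1 := by
    have := Unitary.coe_mul_star_self hH.eigenvectorUnitary
    simpa [hQdef, Matrix.star_eq_conjTranspose, conjTranspose_eq_transpose_of_trivial] using this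
  have hdiag : Qᵀ * (Yᵀ * Y) * Q = diagonal hH.eigenvalues := by
    have := Matrix.IsHermitian.conjStarAlgAut_star_eigenvectorUnitary hH
    rw [Unitary.conjStarAlgAut_star_apply] at this
    simpa [hQdef, Matrix.star_eq_conjTranspose, conjTranspose_eq_transpose_of_trivial,
      RCLike.ofReal_real_eq_id] using this
  have hlam : ∀ i, 0 ≤ hH.eigenvalues i := fun i =>
    (Matrix.posSemidef_conjTranspose_mul_self Y).eigenvalues_nonneg i
  set A := Uᵀ * (Y * Q) with hA
  set B := Vᵀ * Q with hB
  have key : mdot G Y = ∑ i, ∑ r, c r * (B r i * A r i) := by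
    rw [mdot_eq_trace]
    have h1 : (Gᵀ * Y).trace = (Qᵀ * (Gᵀ * Y) * Q).trace := by
      rw [trace_mul_cycle, ← Matrix.mul_assoc, hQ2, Matrix.one_mul]
    have h2 : Qᵀ * (Gᵀ * Y) * Q = Bᵀ * (diagonal c * A) := by
      rw [hG, hB, hA]
      simp only [transpose_mul, transpose_transpose, diagonal_transpose, Matrix.mul_assoc]
    rw [h1, h2, trace]
    refine Finset.sum_congr rfl fun i _ => ?_
    rw [diag, mul_apply]
    refine Finset.sum_congr rfl fun r _ => ?_
    rw [transpose_apply, diagonal_mul]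
    ring
  have hBi : ∀ i, ∑ r, (B r i) ^ 2 ≤ 1 := by
    intro i
    have hb : ∀ r, B r i = (Vᵀ *ᵥ fun j => Q j i) r := by
      intro r; simp [hB, mul_apply, mulVec, dotProduct]
    calc ∑ r, (B r i) ^ 2 = ∑ r, ((Vᵀ *ᵥ fun j => Q j i) r) ^ 2 := by
          refine Finset.sum_congr rfl fun r _ => by rw [hb r]
      _ ≤ ∑ j, (Q j i) ^ 2 := contraction hV _
      _ = (Qᵀ * Q) i i := col_sq_sum Q i
      _ = 1 := by rw [hQ1, one_apply_eq]
  have hAi : ∀ i, ∑ r, (A r i) ^ 2 ≤ hH.eigenvalues i := by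
    intro i
    have ha : ∀ r, A r i = (Uᵀ *ᵥ fun j => (Y * Q) j i) r := by
      intro r; simp [hA, mul_apply, mulVec, dotProduct]
    calc ∑ r, (A r i) ^ 2 = ∑ r, ((Uᵀ *ᵥ fun j => (Y * Q) j i) r) ^ 2 := by
          refine Finset.sum_congr rfl fun r _ => by rw [ha r]
      _ ≤ ∑ j, ((Y * Q) j i) ^ 2 := contraction hU _
      _ = ((Y * Q)ᵀ * (Y * Q)) i i := col_sq_sum _ i
      _ = hH.eigenvalues i := by
          rw [transpose_mul]
          have : Qᵀ * Yᵀ * (Y * Q) = Qᵀ * (Yᵀ * Y) * Q := by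
            simp only [Matrix.mul_assoc]
          rw [this, hdiag, diagonal_apply_eq]
  have hiB : ∀ i, ∑ r, c r * (B r i * A r i) ≤ σ * Real.sqrt (hH.eigenvalues i) := by
    intro i
    calc ∑ r, c r * (B r i * A r i)
        ≤ ∑ r, σ * (|B r i| * |A r i|) := by
          refine Finset.sum_le_sum fun r _ => ?_
          calc c r * (B r i * A r i) ≤ c r * |B r i * A r i| :=
                mul_le_mul_of_nonneg_left (le_abs_self _) (hc0 r)
            _ = c r * (|B r i| * |A r i|) := by rw [abs_mul]
            _ ≤ σ * (|B r i| * |A r i|) :=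
                mul_le_mul_of_nonneg_right (hcσ r) (by positivity)
      _ = σ * ∑ r, |B r i| * |A r i| := by rw [Finset.mul_sum]
      _ ≤ σ * (Real.sqrt (∑ r, (B r i) ^ 2) * Real.sqrt (∑ r, (A r i) ^ 2)) := by
          refine mul_le_mul_of_nonneg_left ?_ hσ0
          have := Real.sum_mul_le_sqrt_mul_sqrt Finset.univ
            (fun r => |B r i|) (fun r => |A r i|)
          simpa [sq_abs] using this
      _ ≤ σ * (1 * Real.sqrt (hH.eigenvalues i)) := by
          refine mul_le_mul_of_nonneg_left ?_ hσ0
          refine mul_le_mul ?_ (Real.sqrt_le_sqrt (hAi i)) (Real.sqrt_nonneg _) zero_le_one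
          calc Real.sqrt (∑ r, (B r i) ^ 2) ≤ Real.sqrt 1 := Real.sqrt_le_sqrt (hBi i)
            _ = 1 := Real.sqrt_one
      _ = σ * Real.sqrt (hH.eigenvalues i) := by ring
  calc mdot G Y = ∑ i, ∑ r, c r * (B r i * A r i) := key
    _ ≤ ∑ i, σ * Real.sqrt (hH.eigenvalues i) := Finset.sum_le_sum fun i _ => hiB i
    _ = σ * nuclearNorm Y := by rw [← Finset.mul_sum]; rfl

lemma mdot_comm {m n : ℕ} (A B : Matrix (Fin m) (Fin n) ℝ) : mdot A B = mdot B A := by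
  simp [mdot, mul_comm]

lemma mdot_sub_left {m n : ℕ} (A B C : Matrix (Fin m) (Fin n) ℝ) :
    mdot (A - B) C = mdot A C - mdot B C := by
  simp [mdot, sub_mul, Finset.sum_sub_distrib]

lemma mdot_add_left {m n : ℕ} (A B C : Matrix (Fin m) (Fin n) ℝ) :
    mdot (A + B) C = mdot A C + mdot B C := by
  simp [mdot, add_mul, Finset.sum_add_distrib]

lemma frobSq_eq_mdot {m n : ℕ} (A : Matrix (Fin m) (Fin n) ℝ) : frobSq A = mdot A A := by
  simp [frobSq, mdot, sq]

lemma frobSq_sub {m n : ℕ} (A B : Matrix (Fin m) (Fin n) ℝ) :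
    frobSq (A - B) = frobSq A - 2 * mdot A B + frobSq B := by
  simp only [frobSq, mdot, Matrix.sub_apply, Finset.mul_sum, ← Finset.sum_add_distrib,
    ← Finset.sum_sub_distrib]
  congr 1; ext i; congr 1; ext j; ring

lemma frobSq_UDV {m n R : ℕ} {U : Matrix (Fin m) (Fin R) ℝ} {V : Matrix (Fin n) (Fin R) ℝ}
    (hU : Uᵀ * U = 1) (hV : Vᵀ * V = 1) (c : Fin R → ℝ) :
    frobSq (U * diagonal c * Vᵀ) = ∑ r, (c r) ^ 2 := by
  rw [frobSq_eq_mdot, mdot_eq_trace, UDV_t_mul hU, trace_VDV hV]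
  exact Finset.sum_congr rfl fun r _ => (sq (c r)).symm

lemma mdot_UDV_UDV {m n R : ℕ} {U : Matrix (Fin m) (Fin R) ℝ} {V : Matrix (Fin n) (Fin R) ℝ}
    (hU : Uᵀ * U = 1) (hV : Vᵀ * V = 1) (c c' : Fin R → ℝ) :
    mdot (U * diagonal c * Vᵀ) (U * diagonal c' * Vᵀ) = ∑ r, c r * c' r := by
  rw [mdot_eq_trace, UDV_t_mul hU, trace_VDV hV]

lemma rank_UDV {m n R : ℕ} {U : Matrix (Fin m) (Fin R) ℝ} {V : Matrix (Fin n) (Fin R) ℝ}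
    (hU : Uᵀ * U = 1) (hV : Vᵀ * V = 1) (c : Fin R → ℝ) :
    (U * diagonal c * Vᵀ).rank = Fintype.card {r // c r ≠ 0} := by
  have hle : (U * diagonal c * Vᵀ).rank ≤ (diagonal c).rank :=
    le_trans (rank_mul_le_left _ _) (rank_mul_le_right _ _)
  have hD : Uᵀ * (U * diagonal c * Vᵀ) * V = diagonal c := by
    calc Uᵀ * (U * diagonal c * Vᵀ) * V = (Uᵀ * U) * diagonal c * (Vᵀ * V) := by
          simp only [Matrix.mul_assoc]
      _ = diagonal c := by rw [hU, hV, Matrix.one_mul, Matrix.mul_one]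
  have hge : (diagonal c).rank ≤ (U * diagonal c * Vᵀ).rank := by
    conv_lhs => rw [← hD]
    exact le_trans (rank_mul_le_left _ _) (rank_mul_le_right _ _)
  rw [le_antisymm hle hge, rank_diagonal]

theorem stmt19 {I₁ I₂ R : ℕ} (X : Matrix (Fin I₁) (Fin I₂) ℝ)
    (U : Matrix (Fin I₁) (Fin R) ℝ) (V : Matrix (Fin I₂) (Fin R) ℝ)
    (d : Fin R → ℝ) (hd : ∀ r, 0 ≤ d r) (hmono : ∀ r s : Fin R, r ≤ s → d s ≤ d r)
    (hU : Uᵀ * U = 1) (hV : Vᵀ * V = 1)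
    (hX : X = U * Matrix.diagonal d * Vᵀ) (σ : ℝ) (hσ : 0 < σ) :
    IsLeast {v : ℝ | ∃ Y : Matrix (Fin I₁) (Fin I₂) ℝ,
        v = (1 / 2) * frobSq (X - Y) + σ * nuclearNorm Y}
      (∑ r, ((1 / 2) * min (d r) σ ^ 2 + σ * max (d r - σ) 0)) ∧
    (U * Matrix.diagonal (fun r => max (d r - σ) 0) * Vᵀ).rank =
      (Finset.univ.filter fun r : Fin R => σ < d r).card ∧
    (1 / 2) * frobSq (X - U * Matrix.diagonal (fun r => max (d r - σ) 0) * Vᵀ) +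
        σ * nuclearNorm (U * Matrix.diagonal (fun r => max (d r - σ) 0) * Vᵀ) =
      ∑ r, ((1 / 2) * min (d r) σ ^ 2 + σ * max (d r - σ) 0) := by
  set e : Fin R → ℝ := fun r => max (d r - σ) 0 with he
  set mc : Fin R → ℝ := fun r => min (d r) σ with hmc
  have he0 : ∀ r, 0 ≤ e r := fun r => le_max_right _ _
  have hmc0 : ∀ r, 0 ≤ mc r := fun r => le_min (hd r) hσ.le
  have hmcσ : ∀ r, mc r ≤ σ := fun r => min_le_right _ _
  have hsum : ∀ r, mc r + e r = d r := by
    intro r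
    rcases le_total (d r) σ with h | h
    · rw [show mc r = d r from min_eq_left h,
        show e r = 0 from max_eq_right (by linarith)]
      ring
    · rw [show mc r = σ from min_eq_right h,
        show e r = d r - σ from max_eq_left (by linarith)]
      ring
  have hmce : ∀ r, mc r * e r = σ * e r := by
    intro r
    rcases le_total (d r) σ with h | h
    · rw [show e r = 0 from max_eq_right (by linarith)]
      ring
    · rw [show mc r = σ from min_eq_right h]
  set E := U * Matrix.diagonal e * Vᵀ with hE
  set G := U * Matrix.diagonal mc * Vᵀ with hG
  have hdsub : Matrix.diagonal d - Matrix.diagonal e = Matrix.diagonal mc := by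
    rw [Matrix.diagonal_sub,
      show (fun r => d r - e r) = mc from funext fun r => by have := hsum r; linarith]
  have hXG : X - E = G := by
    calc X - E = U * (Matrix.diagonal d - Matrix.diagonal e) * Vᵀ := by
          rw [hX, hE, Matrix.mul_sub, Matrix.sub_mul]
      _ = G := by rw [hdsub, hG]
  have hNE : nuclearNorm E = ∑ r, e r := nuclearNorm_UDV hU hV e he0
  have hNE' : σ * nuclearNorm E = σ * ∑ r, e r := by rw [hNE]
  have hfG : frobSq G = ∑ r, (mc r) ^ 2 := frobSq_UDV hU hV mc
  have hmdotEG : mdot E G = σ * ∑ r, e r := by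
    rw [hE, hG, mdot_UDV_UDV hU hV, Finset.mul_sum]
    exact Finset.sum_congr rfl fun r _ => by rw [mul_comm (e r) (mc r), hmce r]
  have htarget : (∑ r, ((1 / 2) * min (d r) σ ^ 2 + σ * max (d r - σ) 0)) =
      (1 / 2) * frobSq G + σ * nuclearNorm E := by
    rw [hfG, hNE, Finset.mul_sum, Finset.mul_sum, ← Finset.sum_add_distrib]
  refine ⟨⟨⟨E, by rw [hXG, htarget]⟩, ?_⟩, ?_, by rw [hXG, htarget]⟩
  · rintro v ⟨Y, rfl⟩
    rw [htarget]
    have h1 : 0 ≤ frobSq (X - Y - G) := frobSq_nonneg _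
    rw [frobSq_sub] at h1
    have h2 : mdot (X - Y) G = frobSq G + σ * ∑ r, e r - mdot G Y := by
      rw [mdot_sub_left]
      have hXE : X = G + E := by rw [← hXG, sub_add_cancel]
      have hXGdot : mdot X G = frobSq G + σ * ∑ r, e r := by
        rw [hXE, mdot_add_left, ← frobSq_eq_mdot, hmdotEG]
      rw [hXGdot, mdot_comm Y G]
    have h3 : mdot G Y ≤ σ * nuclearNorm Y := dual_bound_s19 hU hV mc hσ.le hmc0 hmcσ Y
    linarith
  · rw [hE, rank_UDV hU hV e, Fintype.card_subtype]
    congr 1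
    apply Finset.filter_congr
    intro r _
    simp only [ne_eq, eq_iff_iff]
    constructor
    · intro h
      by_contra hc
      push_neg at hc
      exact h (max_eq_right (by linarith))
    · intro h h0
      have h1 : e r = d r - σ := max_eq_left (by linarith)
      linarith
end
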